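/- For integers m, n, k with m, n ≥ 0 and 0 ≤ k ≤ min(m, n), one has c_{m,n,k}(m, n−k) = (-1)^k · C(m+n−2k, m−k). (This computes the scalar relating the lowest weight vector f^{m+n−2k}φ_{m,n,k} of V(m+n−2k) in V(m)⊗V(n) to the alternating-sign vector (1, −1, 1, …, (−1)^k).) -/

import Mathlib

/-- Binomial coefficient for integer arguments: `C a b = a.choose b` when
`0 ≤ b ≤ a`, and `0` otherwise. -/
def C (a b : ℤ) : ℤ := if 0 ≤ b ∧ b ≤ a then (a.toNat.choose b.toNat : ℤ) else 0

lemma C_of_lt {a b : ℤ} (h : a < b) : C a b = 0 := by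
  simp only [C, if_neg]; omega

lemma C_of_neg {a b : ℤ} (h : b < 0) : C a b = 0 := by
  simp only [C, if_neg]; omega

lemma C_zero {a : ℤ} (h : 0 ≤ a) : C a 0 = 1 := by
  simp [C, h]

lemma C_symm (a b : ℤ) : C a b = C a (a - b) := by
  unfold C
  split_ifs with h1 h2 h2
  · have hb : b.toNat ≤ a.toNat := by omega
    have : (a - b).toNat = a.toNat - b.toNat := by omega
    rw [this, Nat.choose_symm hb]
  · omega
  · omega
  · rfl

lemma C_pascal {a c : ℤ} (ha : 0 ≤ a) : C (a + 1) (c + 1) = C a c + C a (c + 1) := by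
  unfold C
  split_ifs with h1 h2 h3 h2 h3 h3
  · -- 0 ≤ c+1 ≤ a+1, 0 ≤ c ≤ a, 0 ≤ c+1 ≤ a
    have e1 : (a + 1).toNat = a.toNat + 1 := by omega
    have e2 : (c + 1).toNat = c.toNat + 1 := by omega
    rw [e1, e2, Nat.choose_succ_succ]
    push_cast; ring
  · -- c+1 ≤ a+1, 0 ≤ c ≤ a, ¬(c+1 ≤ a) so c = a
    have e1 : (a+1).toNat = a.toNat + 1 := by omega
    have e2 : (c+1).toNat = c.toNat + 1 := by omega
    have e3 : c.toNat = a.toNat := by omega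
    rw [e1, e2, e3]
    simp [Nat.choose_self, Nat.choose_succ_succ, Nat.choose_succ_self]
  · -- 0 ≤ c+1 ≤ a+1, ¬(0 ≤ c ∧ c ≤ a), 0 ≤ c+1 ≤ a : then c < 0, so c+1 = 0? c=-1... c+1 ≥ 0 and c<0 → c = -1, c+1=0
    have : c = -1 := by omega
    subst this
    simp
  · -- c+1 in range, c not, c+1 ≤ a false: c = -1 again? or c > a
    have hc : c = -1 ∨ a < c := by omega
    rcases hc with hc | hc
    · subst hc; simp; omega
    · omega
  · omega
  · omega
  · omega
  · rfl

lemma C_trinomial (N b j : ℤ) : C N b * C b j = C N j * C (N - j) (b - j) := by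
  unfold C
  split_ifs with h1 h2 h3 h4 h3 h4 h2 h3 h4 h3 h4 <;>
    first
      | omega
      | (simp only [mul_zero, zero_mul, mul_one, one_mul])
      | skip
  all_goals try rfl
  -- main case: 0 ≤ b ≤ N, 0 ≤ j ≤ b, 0 ≤ j ≤ N, 0 ≤ b - j ≤ N - j
  · have hkn : b.toNat ≤ N.toNat := by omega
    have hsk : j.toNat ≤ b.toNat := by omega
    have e1 : (N - j).toNat = N.toNat - j.toNat := by omega
    have e2 : (b - j).toNat = b.toNat - j.toNat := by omega
    rw [e1, e2]
    exact_mod_cast congrArg (Nat.cast (R := ℤ)) (Nat.choose_mul (n := N.toNat) hsk)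

/-- helper Pascal without the +1 on second arg -/
lemma C_pascal' {a : ℤ} (ha : 0 ≤ a) (j : ℤ) : C (a + 1) j = C a (j - 1) + C a j := by
  have := C_pascal (a := a) (c := j - 1) ha
  simpa using this

lemma C_self {a : ℤ} (h : 0 ≤ a) : C a a = 1 := by
  rw [C_symm, sub_self, C_zero h]

def S (b : ℤ) (k : ℕ) : ℤ :=
  ∑ j ∈ Finset.range (k + 1), (-1 : ℤ) ^ j * C b j * C (b + k - j) (k - j)

lemma S_zero_left (k : ℕ) : S 0 k = 1 := by
  unfold S
  rw [Finset.sum_eq_single 0]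
  · rw [Nat.cast_zero, pow_zero, C_zero le_rfl]
    rw [show (0:ℤ) + (k:ℤ) - 0 = (k:ℤ) by ring, show ((k:ℤ) - 0) = (k:ℤ) by ring,
      C_self (Int.natCast_nonneg k)]
    ring
  · intro j _ hj
    rw [C_of_lt (show (0:ℤ) < j by exact_mod_cast Nat.pos_of_ne_zero hj)]
    ring
  · intro h; exact absurd (Finset.mem_range.mpr (Nat.succ_pos k)) h

lemma S_eq_one (b : ℤ) (hb : 0 ≤ b) : ∀ k : ℕ, S b k = 1 := by
  refine Int.le_induction (motive := fun b _ => ∀ k : ℕ, S b k = 1) ?_ ?_ b hb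
  · exact S_zero_left
  · intro b hb IH k
    induction k with
    | zero =>
      unfold S
      rw [Finset.sum_range_one, Nat.cast_zero, pow_zero, C_zero (by omega)]
      rw [show b + 1 + (0:ℤ) - 0 = b + 1 by ring, show ((0:ℤ) - 0) = 0 by ring,
        C_zero (by omega)]
      ring
    | succ k IHk =>
      set ff : ℕ → ℤ := fun j =>
        (-1 : ℤ) ^ j * C (b+1) j * C (b + 1 + ((k+1 : ℕ) : ℤ) - j) (((k+1 : ℕ) : ℤ) - j) with hff
      set gg : ℕ → ℤ := fun j =>
        (-1 : ℤ) ^ j * C (b+1) j * C (b + 1 + ((k : ℕ) : ℤ) - j) (((k : ℕ) : ℤ) - j) with hgg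
      set hh : ℕ → ℤ := fun j =>
        (-1 : ℤ) ^ j * C (b+1) j * C (b + ((k+1 : ℕ) : ℤ) - j) (((k+1 : ℕ) : ℤ) - j) with hhh
      set pp : ℕ → ℤ := fun j =>
        (-1 : ℤ) ^ j * C b ((j:ℤ) - 1) * C (b + ((k+1 : ℕ) : ℤ) - j) (((k+1 : ℕ) : ℤ) - j) with hpp
      have step : ∀ j ∈ Finset.range (k+1), ff j = gg j + hh j := by
        intro j hj
        have hj' : (j:ℤ) ≤ k := by
          exact_mod_cast Nat.lt_succ_iff.mp (Finset.mem_range.mp hj)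
        rw [hff, hgg, hhh]
        simp only
        have e1 : b + 1 + ((k+1:ℕ):ℤ) - j = (b + 1 + (k:ℕ) - j) + 1 := by push_cast; ring
        have e2 : ((k+1:ℕ):ℤ) - j = ((k:ℕ) - j) + 1 := by push_cast; ring
        have e3 : b + ((k+1:ℕ):ℤ) - j = b + 1 + (k:ℕ) - j := by push_cast; ring
        rw [e1, e2, C_pascal (by omega), e3]
        ring
      have tail : ff (k+1) = hh (k+1) := by
        rw [hff, hhh]
        simp only
        rw [show b + 1 + ((k+1:ℕ):ℤ) - ((k+1:ℕ):ℤ) = b + 1 by ring,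
          show b + ((k+1:ℕ):ℤ) - ((k+1:ℕ):ℤ) = b by ring,
          show ((k+1:ℕ):ℤ) - ((k+1:ℕ):ℤ) = 0 by ring,
          C_zero (by omega), C_zero (by omega)]
      have split_hh : ∀ j ∈ Finset.range (k+2), hh j = pp j + (-1:ℤ)^j * C b j *
          C (b + ((k+1 : ℕ) : ℤ) - j) (((k+1 : ℕ) : ℤ) - j) := by
        intro j _
        rw [hhh, hpp]
        simp only
        rw [C_pascal' (by omega) (j:ℤ)]
        ring
      have hpp_sum : (∑ j ∈ Finset.range (k+2), pp j) = - S b k := by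
        rw [Finset.sum_range_succ' pp (k+1)]
        have h0 : pp 0 = 0 := by
          rw [hpp]; simp only
          rw [show ((0:ℕ):ℤ) - 1 = -1 by simp, C_of_neg (by norm_num)]
          ring
        rw [h0, add_zero]
        unfold S
        rw [← Finset.sum_neg_distrib]
        apply Finset.sum_congr rfl
        intro i _
        rw [hpp]; simp only
        have e1 : ((i+1:ℕ):ℤ) - 1 = (i:ℤ) := by push_cast; ring
        have e2 : b + ((k+1:ℕ):ℤ) - ((i+1:ℕ):ℤ) = b + (k:ℕ) - i := by push_cast; ring
        have e3 : ((k+1:ℕ):ℤ) - ((i+1:ℕ):ℤ) = ((k:ℕ):ℤ) - i := by push_cast; ring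
        rw [e1, e2, e3, pow_succ]
        ring
      have expand1 : S (b+1) (k+1) = (∑ j ∈ Finset.range (k+1), ff j) + ff (k+1) :=
        Finset.sum_range_succ ff (k+1)
      have hSg : S (b+1) k = ∑ j ∈ Finset.range (k+1), gg j := rfl
      have hSq : S b (k+1) = ∑ j ∈ Finset.range (k+2), (-1:ℤ)^j * C b j *
          C (b + ((k+1 : ℕ) : ℤ) - j) (((k+1 : ℕ) : ℤ) - j) := rfl
      have hVsum : (∑ j ∈ Finset.range (k+2), hh j) = S b (k+1) - S b k := by
        rw [Finset.sum_congr rfl split_hh, Finset.sum_add_distrib, hpp_sum, hSq]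
        ring
      have hVsplit : (∑ j ∈ Finset.range (k+2), hh j)
          = (∑ j ∈ Finset.range (k+1), hh j) + hh (k+1) :=
        Finset.sum_range_succ hh (k+1)
      have key : S (b+1) (k+1) = S (b+1) k + (S b (k+1) - S b k) := by
        rw [expand1, Finset.sum_congr rfl step, Finset.sum_add_distrib, tail, hSg,
          ← hVsum, hVsplit]
        ring
      have IH' : ∀ k, S b k = 1 := by first | exact IH | exact fun k => IH (by omega) k
      rw [key, IHk, IH', IH']
      ring

/-- The coordinate function `c_{m,n,k}(i,j)`. -/
def c (m n k i j : ℤ) : ℤ :=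
  ∑ l ∈ Finset.range (k.toNat + 1),
    (-1 : ℤ) ^ l * C (i + j - k) (i - l) * C (m - l) (k - l) * C (n - k + l) l

theorem lowest_weight_vector_scalar (m n k : ℤ)
    (hm : 0 ≤ m) (hn : 0 ≤ n) (hk0 : 0 ≤ k) (hkm : k ≤ m) (hkn : k ≤ n) :
    c m n k m (n - k) = (-1 : ℤ) ^ k.toNat * C (m + n - 2 * k) (m - k) := by
  have hkt : (k.toNat : ℤ) = k := Int.toNat_of_nonneg hk0
  set kt := k.toNat with hktdef
  have term : ∀ j ∈ Finset.range (kt + 1),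
      (-1 : ℤ) ^ (kt + 1 - 1 - j) * C (m + (n - k) - k) (m - ((kt + 1 - 1 - j : ℕ) : ℤ)) *
          C (m - ((kt + 1 - 1 - j : ℕ) : ℤ)) (k - ((kt + 1 - 1 - j : ℕ) : ℤ)) *
          C (n - k + ((kt + 1 - 1 - j : ℕ) : ℤ)) ((kt + 1 - 1 - j : ℕ) : ℤ)
      = ((-1 : ℤ) ^ kt * C (m + n - 2 * k) (n - k)) *
          ((-1 : ℤ) ^ j * C (n - k) j * C (n - k + (kt : ℤ) - j) ((kt : ℤ) - j)) := by
    intro j hj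
    have hj' : j ≤ kt := Nat.lt_succ_iff.mp (Finset.mem_range.mp hj)
    have hL : ((kt + 1 - 1 - j : ℕ) : ℤ) = k - j := by omega
    have hpow : ((-1 : ℤ)) ^ (kt + 1 - 1 - j) = (-1 : ℤ) ^ kt * (-1 : ℤ) ^ j := by
      have h1 : ((-1 : ℤ)) ^ (kt + 1 - 1 - j) * (-1 : ℤ) ^ j = (-1 : ℤ) ^ kt := by
        rw [← pow_add]; congr 1; omega
      have h2 : ((-1 : ℤ)) ^ j * (-1 : ℤ) ^ j = 1 := by
        rw [← pow_add, ← two_mul, pow_mul]; norm_num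
      calc ((-1 : ℤ)) ^ (kt + 1 - 1 - j)
          = ((-1 : ℤ)) ^ (kt + 1 - 1 - j) * ((-1 : ℤ) ^ j * (-1 : ℤ) ^ j) := by rw [h2, mul_one]
        _ = (-1 : ℤ) ^ kt * (-1 : ℤ) ^ j := by rw [← mul_assoc, h1]
    rw [hL, hpow]
    rw [show m + (n - k) - k = m + n - 2 * k by ring,
      show m - (k - (j : ℤ)) = (m - k) + j by ring,
      show k - (k - (j : ℤ)) = (j : ℤ) by ring]
    rw [show (k - (j : ℤ)) = ((kt : ℤ) - j) by rw [hkt]]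
    rw [show n - k + ((kt : ℤ) - j) = n - k + (kt : ℤ) - j by ring]
    have t1 : C (m + n - 2 * k) ((m - k) + j) * C ((m - k) + j) j
        = C (m + n - 2 * k) j * C (m + n - 2 * k - j) (n - k - j) := by
      rw [C_trinomial (m + n - 2 * k) ((m - k) + j) j,
        show (m - k) + (j : ℤ) - j = m - k by ring,
        C_symm (m + n - 2 * k - j) (m - k),
        show m + n - 2 * k - (j : ℤ) - (m - k) = n - k - j by ring]
    have t2 : C (m + n - 2 * k) j * C (m + n - 2 * k - j) (n - k - j)
        = C (m + n - 2 * k) (n - k) * C (n - k) j :=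
      (C_trinomial (m + n - 2 * k) (n - k) j).symm
    have t3 := t1.trans t2
    linear_combination ((-1 : ℤ) ^ kt * (-1 : ℤ) ^ j * C (n - k + (kt : ℤ) - j) ((kt : ℤ) - j)) * t3
  have hS : (∑ j ∈ Finset.range (kt + 1),
      (-1 : ℤ) ^ j * C (n - k) j * C (n - k + (kt : ℤ) - j) ((kt : ℤ) - j)) = 1 :=
    S_eq_one (n - k) (by omega) kt
  calc c m n k m (n - k)
      = ∑ j ∈ Finset.range (kt + 1),
          ((-1 : ℤ) ^ kt * C (m + n - 2 * k) (n - k)) *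
          ((-1 : ℤ) ^ j * C (n - k) j * C (n - k + (kt : ℤ) - j) ((kt : ℤ) - j)) := by
        rw [show c m n k m (n - k) = ∑ l ∈ Finset.range (kt + 1),
          (-1 : ℤ) ^ l * C (m + (n - k) - k) (m - l) * C (m - l) (k - l) * C (n - k + l) l from rfl]
        rw [← Finset.sum_range_reflect]
        exact Finset.sum_congr rfl term
    _ = ((-1 : ℤ) ^ kt * C (m + n - 2 * k) (n - k)) * ∑ j ∈ Finset.range (kt + 1),
          ((-1 : ℤ) ^ j * C (n - k) j * C (n - k + (kt : ℤ) - j) ((kt : ℤ) - j)) := by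
        rw [Finset.mul_sum]
    _ = (-1 : ℤ) ^ kt * C (m + n - 2 * k) (m - k) := by
        rw [hS, mul_one, C_symm (m + n - 2 * k) (n - k),
          show m + n - 2 * k - (n - k) = m - k by ring]
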